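/- For every finite nonempty set I, the collection of all downsets of the poset (ℕ^I, ⊑) has cardinality exactly ℵ₀, where x ⊑ y iff x(i) ≤ y(i) for all i ∈ I and x and y have the same support. -/

import Mathlib

/-- Support of a tuple of naturals. -/
def supp {I : Type*} (x : I → ℕ) : Set I := {i | x i ≠ 0}

/-- The order `⊑` on `ℕ^I`: pointwise `≤` together with equal supports. -/
def sle {I : Type*} (x y : I → ℕ) : Prop := (∀ i, x i ≤ y i) ∧ supp x = supp y

/-- Downsets of the poset `(ℕ^I, ⊑)`. -/
def IsSleDownset {I : Type*} (X : Set (I → ℕ)) : Prop :=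
  ∀ x ∈ X, ∀ y, sle y x → y ∈ X

lemma sle_refl {I : Type*} (x : I → ℕ) : sle x x := ⟨fun _ => le_rfl, rfl⟩

lemma sle_trans {I : Type*} {x y z : I → ℕ} (h1 : sle x y) (h2 : sle y z) : sle x z :=
  ⟨fun i => (h1.1 i).trans (h2.1 i), h1.2.trans h2.2⟩

/-- The minimal elements of the complement of `X`. -/
def minSet {I : Type*} (X : Set (I → ℕ)) : Set (I → ℕ) :=
  {m | m ∉ X ∧ ∀ y, sle y m → y ≠ m → y ∈ X}

/-- Every antichain w.r.t. `sle` is finite (Dickson's lemma, per support). -/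
lemma antichain_finite {I : Type*} [Finite I] {A : Set (I → ℕ)}
    (hA : IsAntichain sle A) : A.Finite := by
  have : A = ⋃ S : Set I, (A ∩ {x | supp x = S}) := by
    ext x; simp
  rw [this]
  refine Set.finite_iUnion fun S => ?_
  have hanti : IsAntichain (· ≤ ·) (A ∩ {x | supp x = S}) := by
    intro a ha b hb hne hab
    exact hA ha.1 hb.1 hne ⟨fun i => hab i, ha.2.trans hb.2.symm⟩
  have hpwo : (A ∩ {x | supp x = S}).IsPWO :=
    Set.isPWO_of_wellQuasiOrderedLE _
  exact hanti.finite_of_partiallyWellOrderedOn hpwo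

/-- Below any element outside `X` there is a minimal element outside `X`. -/
lemma exists_min {I : Type*} [Finite I] (X : Set (I → ℕ)) :
    ∀ x ∉ X, ∃ m ∈ minSet X, sle m x := by
  cases nonempty_fintype I
  have key : ∀ n : ℕ, ∀ x ∉ X, (∑ i, x i) ≤ n → ∃ m ∈ minSet X, sle m x := by
    intro n
    induction n with
    | zero =>
      intro x hx hsum
      refine ⟨x, ⟨hx, fun y hy hne => ?_⟩, sle_refl x⟩
      exfalso
      apply hne
      funext i
      have := hy.1 i
      have hxi : x i = 0 := by
        have := Finset.sum_eq_zero_iff.mp (Nat.le_zero.mp hsum) i (Finset.mem_univ i)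
        exact this
      omega
    | succ n ih =>
      intro x hx hsum
      by_cases hmin : ∀ y, sle y x → y ≠ x → y ∈ X
      · exact ⟨x, ⟨hx, hmin⟩, sle_refl x⟩
      · push_neg at hmin
        obtain ⟨y, hyx, hne, hyX⟩ := hmin
        have hlt : (∑ i, y i) < ∑ i, x i := by
          apply Finset.sum_lt_sum (fun i _ => hyx.1 i)
          by_contra h
          push_neg at h
          exact hne (funext fun i => le_antisymm (hyx.1 i) (h i (Finset.mem_univ i)))
        obtain ⟨m, hm, hmy⟩ := ih y hyX (by omega)
        exact ⟨m, hm, sle_trans hmy hyx⟩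
  intro x hx
  exact key (∑ i, x i) x hx le_rfl

lemma minSet_antichain {I : Type*} (X : Set (I → ℕ)) : IsAntichain sle (minSet X) := by
  intro a ha b hb hne hab
  exact ha.1 (hb.2 a hab hne)

/-- A downset is determined by the minimal elements of its complement. -/
lemma downset_eq {I : Type*} [Finite I] {X : Set (I → ℕ)} (hX : IsSleDownset X) :
    X = {x | ∀ m ∈ minSet X, ¬ sle m x} := by
  ext x
  constructor
  · intro hx m hm hmx
    exact hm.1 (hX x hx m hmx)
  · intro hx
    by_contra hxX
    obtain ⟨m, hm, hmx⟩ := exists_min X x hxX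
    exact hx m hm hmx

/-- For every finite nonempty set `I`, the collection of all downsets of the poset
`(ℕ^I, ⊑)` has cardinality exactly `ℵ₀`. -/
theorem mk_sle_downsets_eq_aleph0 (I : Type*) [Finite I] [Nonempty I] :
    Cardinal.mk {X : Set (I → ℕ) | IsSleDownset X} = Cardinal.aleph0 := by
  cases nonempty_fintype I
  -- Countable
  have hcnt : Countable {X : Set (I → ℕ) | IsSleDownset X} := by
    have hfin : ∀ X : {X : Set (I → ℕ) | IsSleDownset X}, (minSet X.1).Finite :=
      fun X => antichain_finite (minSet_antichain X.1)
    have hinj : Function.Injective (fun X : {X : Set (I → ℕ) | IsSleDownset X} =>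
        (hfin X).toFinset) := by
      intro X Y h
      have hmin : minSet X.1 = minSet Y.1 := by
        have := congrArg (fun s : Finset (I → ℕ) => (s : Set (I → ℕ))) h
        simpa using this
      ext1
      rw [downset_eq X.2, downset_eq Y.2, hmin]
    exact hinj.countable
  -- Infinite
  have hinf : Infinite {X : Set (I → ℕ) | IsSleDownset X} := by
    set D : ℕ → Set (I → ℕ) := fun n => {x | (∀ i, x i ≤ n) ∧ ∀ i, x i ≠ 0} with hD
    have hDdown : ∀ n, IsSleDownset (D n) := by
      intro n x hx y hyx
      refine ⟨fun i => (hyx.1 i).trans (hx.1 i), fun i => ?_⟩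
      have : i ∈ supp x := hx.2 i
      rw [← hyx.2] at this
      exact this
    have hle : ∀ a b, D a = D b → a ≤ b := by
      intro a b hab
      by_contra h
      push_neg at h
      have ha : (fun _ => a : I → ℕ) ∈ D a := ⟨fun _ => le_rfl, fun _ => show a ≠ 0 by omega⟩
      rw [hab] at ha
      have : a ≤ b := ha.1 (Classical.arbitrary I)
      omega
    have hinj : Function.Injective (fun n => (⟨D n, hDdown n⟩ :
        {X : Set (I → ℕ) | IsSleDownset X})) := by
      intro a b h
      have := congrArg Subtype.val h
      exact le_antisymm (hle a b this) (hle b a this.symm)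
    exact Infinite.of_injective _ hinj
  exact Cardinal.mk_eq_aleph0 _
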